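/- Let $L_0$ be a real symmetric $n\times n$ matrix and $g$ a real-valued function on $\sigma(L_0)$. Define $L(t) = Q(t)^T L_0 Q(t)$ where $e^{tg(L_0)} = Q(t)R(t)$ is the QR factorization with $R(t)$ having positive diagonal. Then at integer times $m = 0,1,2,\ldots$, the matrix $e^{g(L(m))}$ equals the $m$-th iterate $M_m$ of the unshifted QR algorithm applied to $M_0 = e^{g(L_0)}$, where $M_{m+1} = R_m Q_m$ for the QR factorization $Q_m R_m = M_m$. -/

import Mathlib

open Matrix

/-- Diagonal entries of a product of two upper-triangular matrices multiply. -/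
lemma diag_mul_of_triangular {n : ℕ} {B C : Matrix (Fin n) (Fin n) ℝ}
    (hB : B.BlockTriangular id) (hC : C.BlockTriangular id) (i : Fin n) :
    (B * C) i i = B i i * C i i := by
  rw [Matrix.mul_apply, Finset.sum_eq_single i]
  · intro j _ hj
    rcases lt_or_gt_of_ne hj with h | h
    · rw [hB h, zero_mul]
    · rw [hC h, mul_zero]
  · simp

/-- An orthogonal upper-triangular matrix with positive diagonal is the identity. -/
lemma ortho_triangular_eq_one {n : ℕ} {A : Matrix (Fin n) (Fin n) ℝ}
    (hA : A * Aᵀ = 1) (ht : A.BlockTriangular id) (hd : ∀ i, 0 < A i i) :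
    A = 1 := by
  have hinv : A⁻¹ = Aᵀ := Matrix.inv_eq_right_inv hA
  have hInvble : Invertible A := invertibleOfRightInverse _ _ hA
  have hiu : (A⁻¹).BlockTriangular id :=
    Matrix.blockTriangular_inv_of_blockTriangular ht
  have hdiag : ∀ i j : Fin n, i ≠ j → A i j = 0 := by
    intro i j hij
    rcases lt_or_gt_of_ne hij with h | h
    · -- i < j : use Aᵀ upper triangular
      have := hiu (i := j) (j := i) h
      rw [hinv] at this
      simpa [Matrix.transpose_apply] using this
    · exact ht h
  have hone : ∀ i, A i i = 1 := by
    intro i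
    have h1 : (A * Aᵀ) i i = 1 := by rw [hA]; simp
    rw [Matrix.mul_apply, Finset.sum_eq_single i] at h1
    · have : A i i * A i i = 1 := by simpa [Matrix.transpose_apply] using h1
      nlinarith [hd i]
    · intro j _ hj
      rw [hdiag i j (fun h => hj h.symm)]
      simp
    · simp
  ext i j
  by_cases h : i = j
  · subst h; simp [hone i]
  · simp [hdiag i j h, Matrix.one_apply_ne h]

/-- Uniqueness of the QR factorization (positive-diagonal R). -/
lemma qr_unique {n : ℕ} {Q1 R1 Q2 R2 : Matrix (Fin n) (Fin n) ℝ}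
    (h : Q1 * R1 = Q2 * R2)
    (hQ1 : Q1 * Q1ᵀ = 1) (hQ2 : Q2 * Q2ᵀ = 1)
    (hR1 : R1.BlockTriangular id) (hd1 : ∀ i, 0 < R1 i i)
    (hR2 : R2.BlockTriangular id) (hd2 : ∀ i, 0 < R2 i i) :
    Q1 = Q2 := by
  have hdet1 : R1.det ≠ 0 := by
    rw [Matrix.det_of_upperTriangular hR1]
    exact ne_of_gt (Finset.prod_pos fun i _ => hd1 i)
  have hInv1 : Invertible R1 := R1.invertibleOfIsUnitDet (isUnit_iff_ne_zero.mpr hdet1)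
  have hQ2' : Q2ᵀ * Q2 = 1 := mul_eq_one_comm.mp hQ2
  have hQ1' : Q1ᵀ * Q1 = 1 := mul_eq_one_comm.mp hQ1
  set A := Q2ᵀ * Q1 with hAdef
  have hA : A = R2 * R1⁻¹ := by
    have h2 : Q2ᵀ * (Q1 * R1) = R2 := by rw [h, ← mul_assoc, hQ2', one_mul]
    have h3 : A * R1 = R2 := by rw [hAdef, mul_assoc]; exact h2
    rw [← h3, mul_assoc, Matrix.mul_nonsing_inv _ (isUnit_iff_ne_zero.mpr hdet1), mul_one]
  have hAo : A * Aᵀ = 1 := by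
    rw [hAdef, Matrix.transpose_mul, Matrix.transpose_transpose, mul_assoc,
      ← mul_assoc Q1, hQ1, one_mul, hQ2']
  have hR1inv : (R1⁻¹).BlockTriangular id :=
    Matrix.blockTriangular_inv_of_blockTriangular hR1
  have hAt : A.BlockTriangular id := hA ▸ hR2.mul hR1inv
  have hAd : ∀ i, 0 < A i i := by
    intro i
    have hRI : (R1 * R1⁻¹) i i = 1 := by
      rw [Matrix.mul_nonsing_inv _ (isUnit_iff_ne_zero.mpr hdet1)]; simp
    rw [diag_mul_of_triangular hR1 hR1inv] at hRI
    have hpos : 0 < R1⁻¹ i i := by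
      rcases lt_trichotomy (R1⁻¹ i i) 0 with h' | h' | h'
      · nlinarith [hd1 i]
      · rw [h'] at hRI; simp at hRI
      · exact h'
    rw [hA, diag_mul_of_triangular hR2 hR1inv]
    exact mul_pos (hd2 i) hpos
  have hA1 : A = 1 := ortho_triangular_eq_one hAo hAt hAd
  calc Q1 = Q2 * (Q2ᵀ * Q1) := by rw [← mul_assoc, hQ2, one_mul]
    _ = Q2 := by rw [← hAdef, hA1, mul_one]

/-- At integer times, the QR flow interpolates the unshifted QR algorithm:
`e^{g(L(m))} = M_m` where `M₀ = e^{g(L₀)}` and `M_{m+1} = R_m Q_m`. -/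
theorem qr_flow_interpolates_qr_algorithm {n : ℕ}
    (L₀ U : Matrix (Fin n) (Fin n) ℝ) (d : Fin n → ℝ) (g : ℝ → ℝ)
    (hL₀ : L₀.IsSymm)
    (hU : U * Uᵀ = 1)
    (hspec : L₀ = U * Matrix.diagonal d * Uᵀ)
    (gL₀ : Matrix (Fin n) (Fin n) ℝ)
    (hgL₀ : gL₀ = U * Matrix.diagonal (fun i => g (d i)) * Uᵀ)
    -- the QR factorization of the flow `e^{t g(L₀)}`
    (Q R : ℝ → Matrix (Fin n) (Fin n) ℝ)
    (hQR : ∀ t : ℝ, 0 ≤ t → NormedSpace.exp (t • gL₀) = Q t * R t)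
    (hQ : ∀ t : ℝ, 0 ≤ t → Q t * (Q t)ᵀ = 1)
    (hR : ∀ t : ℝ, 0 ≤ t → (R t).BlockTriangular id ∧ ∀ i, 0 < R t i i)
    (hQ0 : Q 0 = 1)
    -- the unshifted QR algorithm applied to `M₀ = e^{g(L₀)}`
    (M Qm Rm : ℕ → Matrix (Fin n) (Fin n) ℝ)
    (hM0 : M 0 = NormedSpace.exp gL₀)
    (hfac : ∀ m : ℕ, M m = Qm m * Rm m)
    (hQm : ∀ m : ℕ, Qm m * (Qm m)ᵀ = 1)
    (hRm : ∀ m : ℕ, (Rm m).BlockTriangular id ∧ ∀ i, 0 < Rm m i i)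
    (hstep : ∀ m : ℕ, M (m + 1) = Rm m * Qm m) :
    -- since `L(m) = Q(m)ᵀ L₀ Q(m)`, we have `g(L(m)) = Q(m)ᵀ g(L₀) Q(m)`, and
    ∀ m : ℕ, NormedSpace.exp ((Q m)ᵀ * gL₀ * Q m) = M m := by
  -- cumulative products
  set Qp : ℕ → Matrix (Fin n) (Fin n) ℝ :=
    fun m => Nat.rec (1 : Matrix (Fin n) (Fin n) ℝ) (fun k acc => acc * Qm k) m with hQp
  set Rp : ℕ → Matrix (Fin n) (Fin n) ℝ :=
    fun m => Nat.rec (1 : Matrix (Fin n) (Fin n) ℝ) (fun k acc => Rm k * acc) m with hRp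
  have hQp0 : Qp 0 = 1 := rfl
  have hQpS : ∀ m, Qp (m + 1) = Qp m * Qm m := fun m => rfl
  have hRp0 : Rp 0 = 1 := rfl
  have hRpS : ∀ m, Rp (m + 1) = Rm m * Rp m := fun m => rfl
  -- joint induction
  have key : ∀ m : ℕ,
      Qp m * (Qp m)ᵀ = 1 ∧ (Rp m).BlockTriangular id ∧ (∀ i, 0 < Rp m i i) ∧
      NormedSpace.exp ((m : ℝ) • gL₀) = Qp m * Rp m ∧
      M m = (Qp m)ᵀ * M 0 * Qp m := by
    intro m
    induction m with
    | zero =>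
      refine ⟨by simp [hQp0], by simp [hRp0, Matrix.blockTriangular_one],
        by simp [hRp0, Matrix.one_apply], ?_, by simp [hQp0]⟩
      simp [hQp0, hRp0, NormedSpace.exp_zero]
    | succ m ih =>
      obtain ⟨ihQ, ihRt, ihRd, ihE, ihM⟩ := ih
      have hQm' : (Qm m)ᵀ * Qm m = 1 := mul_eq_one_comm.mp (hQm m)
      have hQnew : Qp (m + 1) * (Qp (m + 1))ᵀ = 1 := by
        rw [hQpS, Matrix.transpose_mul, mul_assoc, ← mul_assoc (Qm m), hQm m, one_mul, ihQ]
      have hRt : (Rp (m + 1)).BlockTriangular id := by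
        rw [hRpS]; exact (hRm m).1.mul ihRt
      have hRd : ∀ i, 0 < Rp (m + 1) i i := by
        intro i
        rw [hRpS, diag_mul_of_triangular (hRm m).1 ihRt]
        exact mul_pos ((hRm m).2 i) (ihRd i)
      have hRmEq : (Qm m)ᵀ * M m * Qm m * (Qm m)ᵀ = Rm m := by
        rw [hfac m, ← mul_assoc, hQm', one_mul, mul_assoc, hQm m, mul_one]
      have hMnew : M (m + 1) = (Qp (m + 1))ᵀ * M 0 * Qp (m + 1) := by
        rw [hstep m, hQpS, Matrix.transpose_mul, ← hRmEq, ihM]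
        simp only [mul_assoc, hQm', mul_one]
      have hEnew : NormedSpace.exp ((((m + 1 : ℕ)) : ℝ) • gL₀) = Qp (m + 1) * Rp (m + 1) := by
        have hsplit : ((((m + 1 : ℕ)) : ℝ)) • gL₀ = gL₀ + (m : ℝ) • gL₀ := by
          push_cast
          rw [add_smul, one_smul, add_comm]
        have hcomm : Commute gL₀ ((m : ℝ) • gL₀) := (Commute.refl gL₀).smul_right _
        rw [hsplit, Matrix.exp_add_of_commute _ _ hcomm, ihE, ← hM0]
        have hM0Qp : M 0 * Qp m = Qp m * M m := by
          rw [ihM, ← mul_assoc, ← mul_assoc, ihQ, one_mul]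
        calc M 0 * (Qp m * Rp m) = (M 0 * Qp m) * Rp m := by rw [mul_assoc]
          _ = Qp m * M m * Rp m := by rw [hM0Qp]
          _ = Qp m * (Qm m * Rm m) * Rp m := by rw [← hfac m]
          _ = Qp (m + 1) * Rp (m + 1) := by rw [hQpS, hRpS]; simp only [mul_assoc]
      exact ⟨hQnew, hRt, hRd, hEnew, hMnew⟩
  intro m
  obtain ⟨hQpo, hRpt, hRpd, hE, hMm⟩ := key m
  have hm0 : (0 : ℝ) ≤ (m : ℝ) := Nat.cast_nonneg m
  -- identify Q m with Qp m via uniqueness of QR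
  have hfacs : Q (m : ℝ) * R (m : ℝ) = Qp m * Rp m := by
    rw [← hQR _ hm0, hE]
  have hQeq : Q (m : ℝ) = Qp m :=
    qr_unique hfacs (hQ _ hm0) hQpo (hR _ hm0).1 (hR _ hm0).2 hRpt hRpd
  rw [hQeq]
  -- exponential of the conjugation
  have hQp' : (Qp m)ᵀ * Qp m = 1 := mul_eq_one_comm.mp hQpo
  have hUnit : IsUnit (Qp m) := by
    rw [Matrix.isUnit_iff_isUnit_det]
    exact IsUnit.of_mul_eq_one ((Qp m)ᵀ).det (by rw [← Matrix.det_mul, hQpo, Matrix.det_one])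
  have hinv : (Qp m)⁻¹ = (Qp m)ᵀ := Matrix.inv_eq_right_inv hQpo
  rw [← hinv, Matrix.exp_conj' (Qp m) gL₀ hUnit, hinv, ← hM0, hMm]
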